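/- Let C be an association scheme, E a scheme equivalence, and X a class of E. For every basis relation R and classes X, Y of E with R_{X,Y} ≠ ∅, one has |R| = |R_{V/E}| · |R_{X,Y}|, where R_{V/E} = {(X',Y') ∈ V/E × V/E : R_{X',Y'} ≠ ∅} and R_{X,Y} = R ∩ (X × Y). -/

import Mathlib

open Set Function

section Defs

variable {V : Type*}

/-- The diagonal relation on `V`. -/
def diag (V : Type*) : Set (V × V) := {x | x.1 = x.2}

/-- The transpose of a relation. -/
def transp (R : Set (V × V)) : Set (V × V) := {x | (x.2, x.1) ∈ R}

/-- Relational composition (product of relations). -/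
def comp (R S : Set (V × V)) : Set (V × V) := {x | ∃ w, (x.1, w) ∈ R ∧ (w, x.2) ∈ S}

/-- The `n`-fold relational power, with `R^0` the diagonal. -/
def relPow (R : Set (V × V)) : ℕ → Set (V × V)
  | 0 => diag V
  | n + 1 => comp (relPow R n) R

/-- `⟨R⟩`, the union of all relational powers of `R`. -/
def gen (R : Set (V × V)) : Set (V × V) := ⋃ i, relPow R i

/-- Strong connectivity: every ordered pair is joined by a directed walk of positive length
(so every vertex has nonempty out-neighborhood). -/
def StronglyConnected (R : Set (V × V)) : Prop :=
  ∀ u v : V, ∃ n, 0 < n ∧ (u, v) ∈ relPow R n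

/-- A digraph `(V, R)` is cyclically `p`-partite: the vertices are partitioned into `p`
nonempty parts indexed by `ZMod p` such that every arc goes from part `r` to part `r + 1`. -/
def CyclicallyPartite (p : ℕ) (R : Set (V × V)) : Prop :=
  ∃ f : V → ZMod p, Surjective f ∧ ∀ u v : V, (u, v) ∈ R → f v = f u + 1

/-- The induced subdigraph on `X ⊆ V` is cyclically `p`-partite. -/
def CyclicallyPartiteOn (p : ℕ) (X : Set V) (R : Set (V × V)) : Prop :=
  ∃ f : V → ZMod p, (∀ r : ZMod p, ∃ v ∈ X, f v = r) ∧
    ∀ u ∈ X, ∀ v ∈ X, (u, v) ∈ R → f v = f u + 1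

/-- The out-neighborhood `R(u)`. -/
def neighb (R : Set (V × V)) (u : V) : Set V := {v | (u, v) ∈ R}

/-- A homogeneous coherent configuration (association scheme) on a finite set `V`. -/
structure AssocScheme (V : Type*) [Fintype V] where
  classes : Set (Set (V × V))
  part : ∀ x : V × V, ∃! R, R ∈ classes ∧ x ∈ R
  nonempty_mem : ∀ R ∈ classes, R.Nonempty
  transp_mem : ∀ R ∈ classes, transp R ∈ classes
  diag_mem : diag V ∈ classes
  inter : ∀ R ∈ classes, ∀ S ∈ classes, ∀ T ∈ classes, ∀ x ∈ T, ∀ y ∈ T,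
    ({w : V | (Prod.fst x, w) ∈ R ∧ (w, Prod.snd x) ∈ S}).ncard =
    ({w : V | (Prod.fst y, w) ∈ R ∧ (w, Prod.snd y) ∈ S}).ncard

/-- A `p`-scheme: every basis relation has cardinality a power of `p`. -/
def IsPScheme (p : ℕ) {V : Type*} [Fintype V] (C : AssocScheme V) : Prop :=
  ∀ R ∈ C.classes, ∃ k : ℕ, R.ncard = p ^ k

/-- A scheme equivalence: a union of basis relations that is an equivalence relation on `V`. -/
def IsSchemeEquiv {V : Type*} [Fintype V] (C : AssocScheme V) (E : Set (V × V)) : Prop :=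
  (∃ D ⊆ C.classes, E = ⋃₀ D) ∧ Equivalence (fun u v : V => (u, v) ∈ E)

/-- The set of classes of an equivalence relation `E` on `V`. -/
def classesOf {V : Type*} (E : Set (V × V)) : Set (Set V) :=
  {X | ∃ u : V, X = {v | (u, v) ∈ E}}

/-- The quotient relation `R_{V/E}` on the set of classes of `E`. -/
def quotRel {V : Type*} (E R : Set (V × V)) : Set (Set V × Set V) :=
  {q | q.1 ∈ classesOf E ∧ q.2 ∈ classesOf E ∧ (R ∩ q.1 ×ˢ q.2).Nonempty}

/-- A maximal scheme equivalence: `E ≠ V × V` and no scheme equivalence other than `V × V`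
properly contains it. -/
def MaximalEquiv {V : Type*} [Fintype V] (C : AssocScheme V) (E : Set (V × V)) : Prop :=
  IsSchemeEquiv C E ∧ E ≠ Set.univ ∧
    ∀ F, IsSchemeEquiv C F → E ⊆ F → F ≠ Set.univ → F = E

end Defs

section Aux

variable {V : Type*} [Fintype V] (C : AssocScheme V)

/-- The unique basis relation containing a pair. -/
noncomputable def classOfPair (a : V × V) : Set (V × V) :=
  (C.part a).choose

lemma classOfPair_mem (a : V × V) : classOfPair C a ∈ C.classes :=
  (C.part a).choose_spec.1.1

lemma mem_classOfPair (a : V × V) : a ∈ classOfPair C a :=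
  (C.part a).choose_spec.1.2

lemma classOfPair_eq {a : V × V} {T : Set (V × V)} (hT : T ∈ C.classes) (ha : a ∈ T) :
    classOfPair C a = T :=
  ((C.part a).choose_spec.2 T ⟨hT, ha⟩).symm

private lemma ncard_filter_eq {α : Type*} [Fintype α] (p : α → Prop) [DecidablePred p] :
    {x | p x}.ncard = (Finset.univ.filter p).card := by
  rw [← Set.ncard_coe_finset]
  congr 1
  ext x; simp

open Classical in
/-- Key invariance: the number of `w` with `(x,w)` in a union of basis relations and `(w,y)`
in a union of basis relations depends only on the basis relation containing `(x,y)`. -/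
lemma countU {A B : Set (Set (V × V))} (hA : A ⊆ C.classes) (hB : B ⊆ C.classes)
    {T : Set (V × V)} (hT : T ∈ C.classes) {x y x' y' : V}
    (hxy : (x, y) ∈ T) (hxy' : (x', y') ∈ T) :
    {w : V | (x, w) ∈ ⋃₀ A ∧ (w, y) ∈ ⋃₀ B}.ncard
      = {w : V | (x', w) ∈ ⋃₀ A ∧ (w, y') ∈ ⋃₀ B}.ncard := by
  have hAfin : A.Finite := Set.toFinite A
  have hBfin : B.Finite := Set.toFinite B
  have key : ∀ u v : V, (u, v) ∈ T →
      {w : V | (u, w) ∈ ⋃₀ A ∧ (w, v) ∈ ⋃₀ B}.ncard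
        = ∑ q ∈ hAfin.toFinset ×ˢ hBfin.toFinset,
            {w : V | (u, w) ∈ q.1 ∧ (w, v) ∈ q.2}.ncard := by
    intro u v huv
    rw [ncard_filter_eq, Finset.card_eq_sum_card_fiberwise
      (f := fun w => (classOfPair C (u, w), classOfPair C (w, v)))
      (t := hAfin.toFinset ×ˢ hBfin.toFinset)]
    · refine Finset.sum_congr rfl fun q hq => ?_
      rw [ncard_filter_eq]
      congr 1
      ext w
      simp only [Finset.mem_filter, Finset.mem_univ, true_and, Prod.ext_iff]
      simp only [Finset.mem_product, Set.Finite.mem_toFinset] at hq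
      constructor
      · rintro ⟨⟨-, -⟩, h1, h2⟩
        exact ⟨h1 ▸ mem_classOfPair C (u, w), h2 ▸ mem_classOfPair C (w, v)⟩
      · rintro ⟨h1, h2⟩
        exact ⟨⟨⟨q.1, hq.1, h1⟩, ⟨q.2, hq.2, h2⟩⟩,
          classOfPair_eq C (hA hq.1) h1, classOfPair_eq C (hB hq.2) h2⟩
    · intro w hw
      simp only [Finset.mem_coe, Finset.mem_filter, Finset.mem_univ, true_and] at hw
      obtain ⟨⟨S, hS, hS'⟩, S', hT1, hT2⟩ := hw
      simp only [Finset.mem_coe, Finset.mem_product, Set.Finite.mem_toFinset]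
      rw [classOfPair_eq C (hA hS) hS', classOfPair_eq C (hB hT1) hT2]
      exact ⟨hS, hT1⟩
  rw [key x y hxy, key x' y' hxy']
  refine Finset.sum_congr rfl fun q hq => ?_
  simp only [Finset.mem_product, Set.Finite.mem_toFinset] at hq
  exact C.inter q.1 (hA hq.1) q.2 (hB hq.2) T hT (x, y) hxy (x', y') hxy'

open Classical in
/-- Invariance of block sizes: for `(x,y), (x',y') ∈ R`, the blocks `R ∩ [x] ×ˢ [y]` and
`R ∩ [x'] ×ˢ [y']` have the same size. -/
lemma blockN {E : Set (V × V)} (hE : IsSchemeEquiv C E) {R : Set (V × V)}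
    (hR : R ∈ C.classes) {x y x' y' : V} (hxy : (x, y) ∈ R) (hxy' : (x', y') ∈ R) :
    (R ∩ {u | (x, u) ∈ E} ×ˢ {v | (y, v) ∈ E}).ncard
      = (R ∩ {u | (x', u) ∈ E} ×ˢ {v | (y', v) ∈ E}).ncard := by
  obtain ⟨⟨D, hD, hED⟩, hEq⟩ := hE
  -- rewrite the blocks as filtered pair sets with `(v, y) ∈ E` orientation
  have hsym : ∀ a b : V, (a, b) ∈ E ↔ (b, a) ∈ E := fun a b => ⟨hEq.symm, hEq.symm⟩
  have hset : ∀ u v : V,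
      (R ∩ {a | (u, a) ∈ E} ×ˢ {b | (v, b) ∈ E})
        = {p : V × V | (u, p.1) ∈ E ∧ p ∈ R ∧ (p.2, v) ∈ E} := by
    intro u v
    ext p
    simp only [Set.mem_inter_iff, Set.mem_prod, Set.mem_setOf_eq]
    rw [hsym v p.2]
    tauto
  -- representative-based value of the inner count for each basis relation
  set g : Set (V × V) → ℕ := fun T' =>
    if h : T'.Nonempty then {b : V | (h.choose.1, b) ∈ R ∧ (b, h.choose.2) ∈ E}.ncard
    else 0 with hg
  have hRE : R = ⋃₀ {R} := by simp
  have hDE : E = ⋃₀ D := hED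
  have hginner : ∀ (T' : Set (V × V)), T' ∈ C.classes → ∀ u v : V, (u, v) ∈ T' →
      {b : V | (u, b) ∈ R ∧ (b, v) ∈ E}.ncard = g T' := by
    intro T' hT' u v huv
    have hne : T'.Nonempty := ⟨(u, v), huv⟩
    rw [hg]
    simp only [hne, dif_pos]
    have hrep : (hne.choose.1, hne.choose.2) ∈ T' := by
      rw [Prod.mk.eta]; exact hne.choose_spec
    calc {b : V | (u, b) ∈ R ∧ (b, v) ∈ E}.ncard
        = {b : V | (u, b) ∈ ⋃₀ {R} ∧ (b, v) ∈ ⋃₀ D}.ncard := by rw [← hRE, ← hDE]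
      _ = {b : V | (hne.choose.1, b) ∈ ⋃₀ {R} ∧ (b, hne.choose.2) ∈ ⋃₀ D}.ncard :=
          countU C (by simpa using hR) hD hT' huv hrep
      _ = {b : V | (hne.choose.1, b) ∈ R ∧ (b, hne.choose.2) ∈ E}.ncard := by
          rw [← hRE, ← hDE]
  -- the main computation, done for a generic pair in R
  have main : ∀ u v : V, (u, v) ∈ R →
      {p : V × V | (u, p.1) ∈ E ∧ p ∈ R ∧ (p.2, v) ∈ E}.ncard
        = ∑ T' ∈ (Set.toFinite C.classes).toFinset,
            {a : V | (u, a) ∈ E ∧ (a, v) ∈ T'}.ncard * g T' := by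
    intro u v huv
    rw [ncard_filter_eq]
    have step1 : (Finset.univ.filter
        fun p : V × V => (u, p.1) ∈ E ∧ p ∈ R ∧ (p.2, v) ∈ E).card
        = ∑ a : V, (Finset.univ.filter fun b : V => (u, a) ∈ E ∧ (a, b) ∈ R ∧ (b, v) ∈ E).card := by
      rw [Finset.card_filter]
      rw [Fintype.sum_prod_type]
      refine Finset.sum_congr rfl fun a _ => ?_
      rw [Finset.card_filter]
    rw [step1]
    rw [← Finset.sum_fiberwise_of_maps_to
      (g := fun a : V => classOfPair C (a, v)) (t := (Set.toFinite C.classes).toFinset)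
      (fun a _ => (Set.Finite.mem_toFinset _).2 (classOfPair_mem C _))]
    refine Finset.sum_congr rfl fun T' hT' => ?_
    have hT'mem : T' ∈ C.classes := by
      simpa [Set.Finite.mem_toFinset] using hT'
    have hmemiff : ∀ a : V, classOfPair C (a, v) = T' ↔ (a, v) ∈ T' := by
      intro a
      exact ⟨fun h => h ▸ mem_classOfPair C (a, v), fun h => classOfPair_eq C hT'mem h⟩
    -- split off the `(u,a) ∈ E` condition
    have : ∀ a ∈ Finset.univ.filter fun a : V => classOfPair C (a, v) = T',
        (Finset.univ.filter fun b : V => (u, a) ∈ E ∧ (a, b) ∈ R ∧ (b, v) ∈ E).card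
          = if (u, a) ∈ E then g T' else 0 := by
      intro a ha
      simp only [Finset.mem_filter, Finset.mem_univ, true_and] at ha
      by_cases hua : (u, a) ∈ E
      · rw [if_pos hua]
        rw [← hginner T' hT'mem a v ((hmemiff a).1 ha), ncard_filter_eq]
        congr 1
        ext b; simp [hua]
      · rw [if_neg hua]
        rw [Finset.card_eq_zero, Finset.filter_eq_empty_iff]
        intro b _; simp [hua]
    rw [Finset.sum_congr rfl this, ← Finset.sum_filter, Finset.sum_const, smul_eq_mul,
      Finset.filter_filter]
    congr 1
    rw [ncard_filter_eq]
    congr 1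
    ext a
    simp only [Finset.mem_filter, Finset.mem_univ, true_and]
    rw [hmemiff a]
    tauto
  -- conclude
  rw [hset x y, hset x' y', main x y hxy, main x' y' hxy']
  refine Finset.sum_congr rfl fun T' hT' => ?_
  have hT'mem : T' ∈ C.classes := by simpa [Set.Finite.mem_toFinset] using hT'
  congr 1
  calc {a : V | (x, a) ∈ E ∧ (a, y) ∈ T'}.ncard
      = {a : V | (x, a) ∈ ⋃₀ D ∧ (a, y) ∈ ⋃₀ {T'}}.ncard := by rw [← hDE]; simp
    _ = {a : V | (x', a) ∈ ⋃₀ D ∧ (a, y') ∈ ⋃₀ {T'}}.ncard :=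
        countU C hD (by simpa using hT'mem) hR hxy hxy'
    _ = {a : V | (x', a) ∈ E ∧ (a, y') ∈ T'}.ncard := by rw [← hDE]; simp

lemma classesOf_eq_setOf {E : Set (V × V)} (hEq : Equivalence (fun u v : V => (u, v) ∈ E))
    {X : Set V} (hX : X ∈ classesOf E) {x : V} (hx : x ∈ X) :
    X = {v | (x, v) ∈ E} := by
  obtain ⟨a, rfl⟩ := hX
  have hax : (a, x) ∈ E := hx
  ext v
  simp only [Set.mem_setOf_eq]
  exact ⟨fun h => hEq.trans (hEq.symm hax) h, fun h => hEq.trans hax h⟩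

open Classical in
lemma ncard_eq_sum_blocks {E : Set (V × V)} (hEq : Equivalence (fun u v : V => (u, v) ∈ E))
    (R : Set (V × V)) :
    R.ncard = ∑ q ∈ (Set.toFinite (quotRel E R)).toFinset, (R ∩ q.1 ×ˢ q.2).ncard := by
  have h0 : R.ncard = (Finset.univ.filter fun p : V × V => p ∈ R).card :=
    ncard_filter_eq (fun p : V × V => p ∈ R)
  rw [h0, Finset.card_eq_sum_card_fiberwise
    (f := fun p : V × V => (({v | (p.1, v) ∈ E} : Set V), ({v | (p.2, v) ∈ E} : Set V)))
    (t := (Set.toFinite (quotRel E R)).toFinset)]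
  · refine Finset.sum_congr rfl fun q hq => ?_
    rw [Set.Finite.mem_toFinset] at hq
    obtain ⟨hq1, hq2, hq3⟩ := hq
    have hsetq : R ∩ q.1 ×ˢ q.2 = {p : V × V | p ∈ R ∧
        (({v | (p.1, v) ∈ E} : Set V), ({v | (p.2, v) ∈ E} : Set V)) = q} := by
      ext p
      simp only [Set.mem_inter_iff, Set.mem_prod, Set.mem_setOf_eq, Prod.ext_iff]
      constructor
      · rintro ⟨hp, h1, h2⟩
        exact ⟨hp, (classesOf_eq_setOf hEq hq1 h1).symm, (classesOf_eq_setOf hEq hq2 h2).symm⟩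
      · rintro ⟨hp, h1, h2⟩
        exact ⟨hp, h1 ▸ hEq.refl p.1, h2 ▸ hEq.refl p.2⟩
    rw [hsetq, ncard_filter_eq, Finset.filter_filter]
  · intro p hp
    rw [Finset.mem_coe, Finset.mem_filter] at hp
    rw [Finset.mem_coe, Set.Finite.mem_toFinset]
    exact ⟨⟨p.1, rfl⟩, ⟨p.2, rfl⟩, ⟨p, hp.2, hEq.refl p.1, hEq.refl p.2⟩⟩



end Aux

/-- `|R| = |R_{V/E}| · |R_{X,Y}|` for any classes `X, Y` of a scheme equivalence
`E` with `R_{X,Y} ≠ ∅`. -/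
theorem card_eq_quot_mul_block {V : Type*} [Fintype V] (C : AssocScheme V)
    {E : Set (V × V)} (hE : IsSchemeEquiv C E) :
    ∀ R ∈ C.classes, ∀ X ∈ classesOf E, ∀ Y ∈ classesOf E,
      (R ∩ X ×ˢ Y).Nonempty →
        R.ncard = (quotRel E R).ncard * (R ∩ X ×ˢ Y).ncard := by
  intro R hR X hX Y hY hne
  have hEq := hE.2
  obtain ⟨⟨x, y⟩, hmem⟩ := hne
  obtain ⟨hxyR, hxX, hyY⟩ : (x, y) ∈ R ∧ x ∈ X ∧ y ∈ Y := by
    simpa [Set.mem_inter_iff, Set.mem_prod] using hmem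
  have hXeq : X = {v | (x, v) ∈ E} := classesOf_eq_setOf hEq hX hxX
  have hYeq : Y = {v | (y, v) ∈ E} := classesOf_eq_setOf hEq hY hyY
  set QF := (Set.toFinite (quotRel E R)).toFinset with hQF
  have hconst : ∀ q ∈ QF, (R ∩ q.1 ×ˢ q.2).ncard = (R ∩ X ×ˢ Y).ncard := by
    intro q hq
    rw [hQF, Set.Finite.mem_toFinset] at hq
    obtain ⟨hq1, hq2, ⟨x', y'⟩, hq3⟩ := hq
    obtain ⟨hxyR', hxX', hyY'⟩ : (x', y') ∈ R ∧ x' ∈ q.1 ∧ y' ∈ q.2 := by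
      simpa [Set.mem_inter_iff, Set.mem_prod] using hq3
    rw [classesOf_eq_setOf hEq hq1 hxX', classesOf_eq_setOf hEq hq2 hyY', hXeq, hYeq]
    exact (blockN C hE hR hxyR hxyR').symm
  calc R.ncard = ∑ q ∈ QF, (R ∩ q.1 ×ˢ q.2).ncard := ncard_eq_sum_blocks hEq R
    _ = QF.card * (R ∩ X ×ˢ Y).ncard := by
        rw [Finset.sum_congr rfl hconst, Finset.sum_const, smul_eq_mul]
    _ = (quotRel E R).ncard * (R ∩ X ×ˢ Y).ncard := by
        rw [hQF, ← Set.ncard_eq_toFinset_card (quotRel E R) (Set.toFinite (quotRel E R))]
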